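/- If x₁, …, x_N and X are independent uniformly distributed random points in a Euclidean ball of radius R in ℝ^s, then the expected value of min_{1≤i≤N} |X − xᵢ| is asymptotically equal to (Γ(1/s)/s) · R / N^{1/s} as N → ∞; i.e., the ratio of E[min_i |X − xᵢ|] to (Γ(1/s)/s) R N^{−1/s} tends to 1. -/

import Mathlib

open MeasureTheory Metric Filter Set

namespace Stmt10

noncomputable section

abbrev E (s : ℕ) := EuclideanSpace ℝ (Fin s)

def uball (s : ℕ) (R : ℝ) : Measure (E s) :=
  (volume (closedBall (0 : E s) R))⁻¹ • volume.restrict (closedBall (0 : E s) R)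

variable {s : ℕ} {R : ℝ}

lemma volB_pos (hR : 0 < R) : 0 < volume (closedBall (0 : E s) R) :=
  measure_closedBall_pos _ _ hR

lemma volB_ne_top : volume (closedBall (0 : E s) R) ≠ ⊤ :=
  measure_closedBall_lt_top.ne

lemma uball_apply {A : Set (E s)} (hA : MeasurableSet A) :
    uball s R A = (volume (closedBall (0 : E s) R))⁻¹ *
      volume (A ∩ closedBall (0 : E s) R) := by
  simp [uball, Measure.smul_apply, Measure.restrict_apply hA, smul_eq_mul]

lemma isProb (hR : 0 < R) : IsProbabilityMeasure (uball s R) := by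
  constructor
  rw [uball_apply MeasurableSet.univ, Set.univ_inter]
  exact ENNReal.inv_mul_cancel (volB_pos hR).ne' volB_ne_top

def G (s : ℕ) (R : ℝ) (x : E s) (t : ℝ) : ℝ := (uball s R (closedBall x t)).toReal

lemma vol_cB (x : E s) {t : ℝ} (ht : 0 ≤ t) :
    volume (closedBall x t) = ENNReal.ofReal (t ^ s) * volume (closedBall (0 : E s) 1) := by
  simpa [finrank_euclideanSpace_fin] using Measure.addHaar_closedBall' volume x ht

lemma G_nonneg (x : E s) (t : ℝ) : 0 ≤ G s R x t := ENNReal.toReal_nonneg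

lemma G_le_one (hR : 0 < R) (x : E s) (t : ℝ) : G s R x t ≤ 1 := by
  haveI := isProb (s := s) hR
  have h := prob_le_one (μ := uball s R) (s := closedBall x t)
  simpa [G] using ENNReal.toReal_mono ENNReal.one_ne_top h

lemma G_mono (hR : 0 < R) (x : E s) : Monotone (G s R x) := by
  haveI := isProb (s := s) hR
  intro a b hab
  exact ENNReal.toReal_mono (measure_ne_top _ _)
    (measure_mono (closedBall_subset_closedBall hab))

lemma G_eq_pow (hR : 0 < R) {x : E s} {t : ℝ} (ht : 0 ≤ t) (hsub : t + ‖x‖ ≤ R) :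
    G s R x t = (t / R) ^ s := by
  have hBsub : closedBall x t ⊆ closedBall (0 : E s) R := by
    apply closedBall_subset_closedBall'
    simpa [dist_zero_right] using hsub
  have hV0 : volume (closedBall (0 : E s) 1) ≠ 0 := (volB_pos one_pos).ne'
  have hVt : volume (closedBall (0 : E s) 1) ≠ ⊤ := volB_ne_top
  have hv : (0:ℝ) < (volume (closedBall (0 : E s) 1)).toReal :=
    ENNReal.toReal_pos hV0 hVt
  rw [G, uball_apply measurableSet_closedBall, Set.inter_eq_self_of_subset_left hBsub,
    vol_cB x ht, vol_cB (0 : E s) hR.le, ENNReal.toReal_mul, ENNReal.toReal_inv,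
    ENNReal.toReal_mul, ENNReal.toReal_mul, ENNReal.toReal_ofReal (pow_nonneg ht s),
    ENNReal.toReal_ofReal (pow_nonneg hR.le s), div_pow]
  field_simp

lemma G_eq_one (hR : 0 < R) {x : E s} (hx : x ∈ closedBall (0 : E s) R) {t : ℝ}
    (ht : 2 * R ≤ t) : G s R x t = 1 := by
  have hBsub : closedBall (0 : E s) R ⊆ closedBall x t := by
    intro y hy
    simp only [mem_closedBall] at hy ⊢
    calc dist y x ≤ dist y 0 + dist 0 x := dist_triangle _ _ _
    _ ≤ R + R := by
        refine add_le_add hy ?_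
        simpa [dist_comm] using mem_closedBall.mp hx
    _ ≤ t := by linarith
  rw [G, uball_apply measurableSet_closedBall, Set.inter_eq_self_of_subset_right hBsub,
    ENNReal.inv_mul_cancel (volB_pos hR).ne' volB_ne_top, ENNReal.toReal_one]

lemma G_lower (hs : 1 ≤ s) (hR : 0 < R) {x : E s} (hx : x ∈ closedBall (0 : E s) R)
    {t : ℝ} (ht0 : 0 ≤ t) (ht : t ≤ 2 * R) :
    (t / (2 * R)) ^ s ≤ G s R x t := by
  haveI := isProb (s := s) hR
  rcases ht0.eq_or_lt with rfl | htpos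
  · rw [zero_div, zero_pow (by omega)]
    exact G_nonneg x 0
  have hxR : ‖x‖ ≤ R := by simpa [dist_zero_right] using mem_closedBall.mp hx
  -- find a point c with closedBall c (t/2) ⊆ closedBall x t ∩ closedBall 0 R
  obtain ⟨c, hc1, hc2⟩ : ∃ c : E s, closedBall c (t / 2) ⊆ closedBall x t ∧
      closedBall c (t / 2) ⊆ closedBall (0 : E s) R := by
    rcases lt_or_ge ‖x‖ (t / 2) with hlt | hge
    · refine ⟨0, ?_, ?_⟩
      · apply closedBall_subset_closedBall'
        rw [dist_zero_left]; linarith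
      · exact closedBall_subset_closedBall (by linarith)
    · have hxpos : (0:ℝ) < ‖x‖ := lt_of_lt_of_le (by linarith) hge
      refine ⟨(1 - t / (2 * ‖x‖)) • x, ?_, ?_⟩
      · apply closedBall_subset_closedBall'
        have : dist ((1 - t / (2 * ‖x‖)) • x) x = t / 2 := by
          rw [dist_eq_norm]
          have hmod : (1 - t / (2 * ‖x‖)) • x - x = (-(t / (2 * ‖x‖))) • x := by module
          rw [hmod, norm_smul, Real.norm_eq_abs, abs_neg,
            abs_of_nonneg (by positivity)]
          field_simp
        rw [this]; linarith
      · apply closedBall_subset_closedBall'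
        have hθ : t / (2 * ‖x‖) ≤ 1 := by
          rw [div_le_one (by positivity)]; linarith
        have : dist ((1 - t / (2 * ‖x‖)) • x) 0 = ‖x‖ - t / 2 := by
          rw [dist_zero_right, norm_smul, Real.norm_eq_abs, abs_of_nonneg (by linarith)]
          field_simp
        rw [this]; linarith
  have hmeas : ENNReal.ofReal ((t / 2) ^ s) * volume (closedBall (0 : E s) 1) ≤
      volume (closedBall x t ∩ closedBall (0 : E s) R) := by
    rw [← vol_cB c (by positivity)]
    exact measure_mono (Set.subset_inter hc1 hc2)
  have key : ((volume (closedBall (0 : E s) R))⁻¹ *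
      (ENNReal.ofReal ((t / 2) ^ s) * volume (closedBall (0 : E s) 1))).toReal ≤ G s R x t := by
    rw [G, uball_apply measurableSet_closedBall]
    exact ENNReal.toReal_mono
      (by
        rw [← uball_apply measurableSet_closedBall]
        exact measure_ne_top _ _)
      (mul_le_mul_right hmeas _)
  refine le_trans (le_of_eq ?_) key
  have hV0 : volume (closedBall (0 : E s) 1) ≠ 0 := (volB_pos one_pos).ne'
  have hVt : volume (closedBall (0 : E s) 1) ≠ ⊤ := volB_ne_top
  have hv : (0:ℝ) < (volume (closedBall (0 : E s) 1)).toReal :=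
    ENNReal.toReal_pos hV0 hVt
  rw [vol_cB (0 : E s) hR.le, ENNReal.toReal_mul, ENNReal.toReal_inv, ENNReal.toReal_mul,
    ENNReal.toReal_mul, ENNReal.toReal_ofReal (by positivity),
    ENNReal.toReal_ofReal (by positivity), div_pow, div_pow, mul_pow]
  field_simp


variable {N : ℕ}

def F (s : ℕ) (R : ℝ) (N : ℕ) (x : E s) : ℝ :=
  ∫ y : Fin N → E s, (⨅ i, dist x (y i)) ∂(Measure.pi fun _ => uball s R)

lemma lt_iInf_iff_forall {N : ℕ} (hN : 1 ≤ N) (f : Fin N → ℝ) (t : ℝ) (h0 : ∀ i, 0 ≤ f i) :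
    t < ⨅ i, f i ↔ ∀ i, t < f i := by
  haveI : Nonempty (Fin N) := Fin.pos_iff_nonempty.mp hN
  have hbdd : BddBelow (Set.range f) := ⟨0, by rintro _ ⟨j, rfl⟩; exact h0 j⟩
  constructor
  · intro h i; exact lt_of_lt_of_le h (ciInf_le hbdd i)
  · intro h
    obtain ⟨i0, hi0⟩ := Finite.exists_min f
    have heq : ⨅ i, f i = f i0 := le_antisymm (ciInf_le hbdd i0) (le_ciInf hi0)
    rw [heq]; exact h i0

lemma inf_dist_nonneg (x : E s) (y : Fin N → E s) : 0 ≤ ⨅ i, dist x (y i) :=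
  Real.iInf_nonneg fun _ => dist_nonneg

lemma uball_mem_ae (hR : 0 < R) : ∀ᵐ x ∂uball s R, x ∈ closedBall (0 : E s) R := by
  rw [MeasureTheory.ae_iff]
  have : {x : E s | ¬ x ∈ closedBall (0 : E s) R} = (closedBall (0 : E s) R)ᶜ := rfl
  rw [this, uball_apply measurableSet_closedBall.compl, compl_inter_self]
  simp

lemma pi_mem_ae (hR : 0 < R) :
    ∀ᵐ y ∂(Measure.pi fun _ : Fin N => uball s R), ∀ i, y i ∈ closedBall (0 : E s) R := by
  haveI := isProb (s := s) hR
  have hms : MeasurableSet (Set.pi Set.univ fun _ : Fin N => closedBall (0 : E s) R) :=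
    MeasurableSet.univ_pi fun _ => measurableSet_closedBall
  have hB1 : uball s R (closedBall (0 : E s) R) = 1 := by
    rw [uball_apply measurableSet_closedBall, Set.inter_self]
    exact ENNReal.inv_mul_cancel (volB_pos hR).ne' volB_ne_top
  have h1 : (Measure.pi fun _ : Fin N => uball s R)
      (Set.pi Set.univ fun _ => closedBall (0 : E s) R) = 1 := by
    rw [Measure.pi_pi]
    simp [hB1]
  rw [MeasureTheory.ae_iff]
  have hcompl : {y : Fin N → E s | ¬ ∀ i, y i ∈ closedBall (0 : E s) R} =
      (Set.pi Set.univ fun _ : Fin N => closedBall (0 : E s) R)ᶜ := by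
    ext y; simp [Set.mem_pi]
  rw [hcompl, measure_compl hms (by simp [h1]), h1, Measure.pi_univ]
  simp

lemma integrable_inf (hR : 0 < R) {x : E s} (hx : x ∈ closedBall (0 : E s) R) :
    Integrable (fun y : Fin N → E s => ⨅ i, dist x (y i))
      (Measure.pi fun _ : Fin N => uball s R) := by
  haveI := isProb (s := s) hR
  have hmeas : Measurable (fun y : Fin N → E s => ⨅ i, dist x (y i)) :=
    Measurable.iInf fun i => (continuous_const.dist (continuous_apply i)).measurable
  refine Integrable.mono' (integrable_const (2 * R)) hmeas.aestronglyMeasurable ?_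
  filter_upwards [pi_mem_ae hR] with y hy
  rw [Real.norm_eq_abs, abs_of_nonneg (inf_dist_nonneg x y)]
  rcases Nat.eq_zero_or_pos N with hN | hN
  · subst hN
    haveI : IsEmpty (Fin 0) := by infer_instance
    rw [Real.iInf_of_isEmpty]
    positivity
  · haveI : Nonempty (Fin N) := Fin.pos_iff_nonempty.mp hN
    have hbdd : BddBelow (Set.range fun i => dist x (y i)) :=
      ⟨0, by rintro _ ⟨j, rfl⟩; exact dist_nonneg⟩
    refine le_trans (ciInf_le hbdd (Classical.arbitrary _)) ?_
    set i := Classical.arbitrary (Fin N)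
    calc dist x (y i) ≤ ‖x‖ + ‖y i‖ := by
          simpa [dist_eq_norm] using norm_sub_le x (y i)
    _ ≤ R + R := add_le_add (by simpa [dist_zero_right] using mem_closedBall.mp hx)
        (by simpa [dist_zero_right] using mem_closedBall.mp (hy i))
    _ = 2 * R := by ring

lemma F_eq (hR : 0 < R) (hN : 1 ≤ N) {x : E s} (hx : x ∈ closedBall (0 : E s) R) :
    F s R N x = ∫ t in Set.Ioi (0:ℝ), (1 - G s R x t) ^ N := by
  haveI := isProb (s := s) hR
  rw [F, Integrable.integral_eq_integral_meas_lt (integrable_inf hR hx)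
    (Filter.Eventually.of_forall fun y => inf_dist_nonneg x y)]
  refine setIntegral_congr_fun measurableSet_Ioi fun t ht => ?_
  have hset : {y : Fin N → E s | t < ⨅ i, dist x (y i)} =
      Set.pi Set.univ fun _ : Fin N => (closedBall x t)ᶜ := by
    ext y
    rw [Set.mem_setOf_eq, lt_iInf_iff_forall hN _ _ fun i => dist_nonneg]
    simp [Set.mem_pi, mem_closedBall, dist_comm, not_le]
  rw [hset, measureReal_def, Measure.pi_pi]
  have hcompl : uball s R (closedBall x t)ᶜ = 1 - uball s R (closedBall x t) :=
    prob_compl_eq_one_sub measurableSet_closedBall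
  rw [Finset.prod_const, hcompl]
  simp only [Finset.card_univ, Fintype.card_fin]
  rw [ENNReal.toReal_pow, ENNReal.toReal_sub_of_le prob_le_one ENNReal.one_ne_top,
    ENNReal.toReal_one]
  rfl


def q (s N : ℕ) : ℝ := (N : ℝ) ^ ((1:ℝ) / s)

lemma q_nonneg : 0 ≤ q s N := Real.rpow_nonneg (Nat.cast_nonneg N) _

lemma q_pos (hN : 1 ≤ N) : 0 < q s N :=
  Real.rpow_pos_of_pos (by exact_mod_cast hN) _

lemma q_pow (hs : 1 ≤ s) (N : ℕ) : q s N ^ s = N := by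
  have hs0 : (s:ℝ) ≠ 0 := by positivity
  rw [q, ← Real.rpow_natCast ((N:ℝ) ^ ((1:ℝ)/s)) s, ← Real.rpow_mul (Nat.cast_nonneg N),
    one_div, inv_mul_cancel₀ hs0, Real.rpow_one]

def h (s : ℕ) (R : ℝ) (N : ℕ) (x : E s) (u : ℝ) : ℝ := (1 - G s R x (R / q s N * u)) ^ N

def bound (s : ℕ) (u : ℝ) : ℝ := Real.exp (-(1 / 2 ^ s) * u ^ s)

lemma h_nonneg (hR : 0 < R) (x : E s) (u : ℝ) : 0 ≤ h s R N x u :=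
  pow_nonneg (sub_nonneg.2 (G_le_one hR x _)) N

lemma F_rescale (hR : 0 < R) (hN : 1 ≤ N) {x : E s} (hx : x ∈ closedBall (0 : E s) R) :
    (∫ u in Set.Ioi (0:ℝ), h s R N x u) = q s N / R * F s R N x := by
  rw [F_eq hR hN hx]
  have hb : 0 < R / q s N := div_pos hR (q_pos hN)
  have key := integral_comp_mul_left_Ioi (fun t => (1 - G s R x t) ^ N) 0 hb
  simp only [mul_zero] at key
  rw [show (∫ u in Set.Ioi (0:ℝ), h s R N x u) =
    ∫ u in Set.Ioi (0:ℝ), (fun t => (1 - G s R x t) ^ N) (R / q s N * u) from rfl, key,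
    smul_eq_mul, inv_div]

lemma h_le_bound (hs : 1 ≤ s) (hR : 0 < R) (hN : 1 ≤ N) {x : E s}
    (hx : x ∈ closedBall (0 : E s) R) {u : ℝ} (hu : 0 < u) :
    h s R N x u ≤ bound s u := by
  have hqp : 0 < q s N := q_pos hN
  set t := R / q s N * u with htdef
  have ht0 : 0 ≤ t := by positivity
  have hN0 : (N:ℝ) ≠ 0 := by positivity
  rcases le_or_gt t (2 * R) with hle | hlt
  · have hG := G_lower hs hR hx ht0 hle
    have hval : (t / (2 * R)) ^ s = 1 / 2 ^ s * u ^ s / N := by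
      have : t / (2 * R) = u / (2 * q s N) := by
        rw [htdef]; field_simp
      rw [this, div_pow, mul_pow, q_pow hs]
      field_simp
    rw [hval] at hG
    have hG1 : G s R x t ≤ 1 := G_le_one hR x t
    have step1 : 1 - G s R x t ≤ Real.exp (-(1 / 2 ^ s * u ^ s / N)) := by
      have := Real.add_one_le_exp (-(1 / 2 ^ s * u ^ s / N))
      linarith
    have step2 : h s R N x u ≤ Real.exp (-(1 / 2 ^ s * u ^ s / N)) ^ N :=
      pow_le_pow_left₀ (sub_nonneg.2 hG1) step1 N
    refine step2.trans (le_of_eq ?_)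
    rw [← Real.exp_nat_mul, bound]
    congr 1
    field_simp
  · rw [h, G_eq_one hR hx hlt.le, sub_self, zero_pow (by omega)]
    exact (Real.exp_pos _).le

lemma bound_integrableOn (hs : 1 ≤ s) : IntegrableOn (bound s) (Set.Ioi (0:ℝ)) := by
  have hmain := integrableOn_rpow_mul_exp_neg_mul_rpow (p := (s:ℝ)) (s := (0:ℝ))
    (b := 1 / 2 ^ s) (by norm_num) (by exact_mod_cast hs) (by positivity)
  refine hmain.congr_fun (fun u hu => ?_) measurableSet_Ioi
  dsimp only
  rw [Real.rpow_zero, one_mul, Real.rpow_natCast, bound]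

lemma h_measurable (hR : 0 < R) (x : E s) (N : ℕ) : Measurable (h s R N x) := by
  have hc : 0 ≤ R / q s N := div_nonneg hR.le q_nonneg
  have hmono : Monotone fun u => G s R x (R / q s N * u) :=
    (G_mono hR x).comp fun a b hab => mul_le_mul_of_nonneg_left hab hc
  exact (measurable_const.sub hmono.measurable).pow_const N

lemma h_integrableOn (hs : 1 ≤ s) (hR : 0 < R) (hN : 1 ≤ N) {x : E s}
    (hx : x ∈ closedBall (0 : E s) R) :
    IntegrableOn (h s R N x) (Set.Ioi (0:ℝ)) := by
  refine Integrable.mono' (bound_integrableOn hs) (h_measurable hR x N).aestronglyMeasurable ?_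
  refine (ae_restrict_iff' measurableSet_Ioi).2 (Filter.Eventually.of_forall fun u hu => ?_)
  rw [Real.norm_eq_abs, abs_of_nonneg (h_nonneg hR x u)]
  exact h_le_bound hs hR hN hx hu

lemma J_le (hs : 1 ≤ s) (hR : 0 < R) (hN : 1 ≤ N) {x : E s}
    (hx : x ∈ closedBall (0 : E s) R) :
    (∫ u in Set.Ioi (0:ℝ), h s R N x u) ≤ ∫ u in Set.Ioi (0:ℝ), bound s u := by
  refine integral_mono_ae (h_integrableOn hs hR hN hx) (bound_integrableOn hs) ?_
  exact (ae_restrict_iff' measurableSet_Ioi).2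
    (Filter.Eventually.of_forall fun u hu => h_le_bound hs hR hN hx hu)

lemma h_tendsto (hs : 1 ≤ s) (hR : 0 < R) {x : E s} (hx : ‖x‖ < R) {u : ℝ} (hu : 0 < u) :
    Tendsto (fun N => h s R N x u) atTop (nhds (Real.exp (-(u ^ s : ℝ)))) := by
  have hs0 : (0:ℝ) < (1:ℝ) / s := by
    have : (0:ℝ) < (s:ℝ) := by exact_mod_cast hs
    positivity
  have hq : Tendsto (fun N : ℕ => q s N) atTop atTop :=
    (tendsto_rpow_atTop hs0).comp tendsto_natCast_atTop_atTop
  have ht0 : Tendsto (fun N : ℕ => R / q s N * u) atTop (nhds 0) := by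
    have h1 : Tendsto (fun N : ℕ => (q s N)⁻¹) atTop (nhds 0) := hq.inv_tendsto_atTop
    have h2 : Tendsto (fun N : ℕ => R * u * (q s N)⁻¹) atTop (nhds (R * u * 0)) :=
      h1.const_mul _
    rw [mul_zero] at h2
    refine h2.congr fun N => ?_
    field_simp
  have hev : ∀ᶠ N : ℕ in atTop, h s R N x u = (1 + -(u ^ s : ℝ) / N) ^ N := by
    filter_upwards [ht0.eventually_lt_const (show (0:ℝ) < R - ‖x‖ by linarith),
      eventually_ge_atTop 1] with N hN1 hN2
    have hqp : 0 < q s N := q_pos hN2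
    have ht0' : 0 ≤ R / q s N * u := by positivity
    rw [h, G_eq_pow hR ht0' (by linarith)]
    congr 1
    have hRr : R / q s N * u / R = u / q s N := by field_simp
    rw [hRr, div_pow, q_pow hs]
    ring
  exact Tendsto.congr' (hev.mono fun N hN => hN.symm) (Real.tendsto_one_add_div_pow_exp (-(u ^ s : ℝ)))

lemma J_tendsto (hs : 1 ≤ s) (hR : 0 < R) {x : E s} (hx : ‖x‖ < R) :
    Tendsto (fun N => ∫ u in Set.Ioi (0:ℝ), h s R N x u) atTop
      (nhds (Real.Gamma (1 / s + 1))) := by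
  have hxB : x ∈ closedBall (0 : E s) R := by
    rw [mem_closedBall, dist_zero_right]; exact hx.le
  have hsR : (0:ℝ) < (s:ℝ) := by exact_mod_cast hs
  have hΓ : (∫ u in Set.Ioi (0:ℝ), Real.exp (-(u ^ s : ℝ))) = Real.Gamma (1 / s + 1) := by
    rw [← integral_exp_neg_rpow hsR]
    exact setIntegral_congr_fun measurableSet_Ioi fun u hu => by rw [Real.rpow_natCast]
  rw [← hΓ]
  apply (tendsto_add_atTop_iff_nat 1).1
  apply tendsto_integral_of_dominated_convergence (bound s)
  · exact fun n => ((h_measurable hR x (n + 1)).aestronglyMeasurable)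
  · exact bound_integrableOn hs
  · intro n
    refine (ae_restrict_iff' measurableSet_Ioi).2 (Filter.Eventually.of_forall fun u hu => ?_)
    rw [Real.norm_eq_abs, abs_of_nonneg (h_nonneg hR x u)]
    exact h_le_bound hs hR (Nat.le_add_left 1 n) hxB hu
  · refine (ae_restrict_iff' measurableSet_Ioi).2 (Filter.Eventually.of_forall fun u hu => ?_)
    exact (tendsto_add_atTop_iff_nat 1).2 (h_tendsto hs hR hx hu)

lemma ae_norm_lt (hR : 0 < R) : ∀ᵐ x ∂uball s R, ‖x‖ < R := by
  have h1 := uball_mem_ae (s := s) hR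
  have h2' : ∀ᵐ x ∂uball s R, x ∉ sphere (0 : E s) R := by
    rw [MeasureTheory.ae_iff]
    have hset : {x : E s | ¬ x ∉ sphere (0 : E s) R} = sphere (0 : E s) R := by
      ext x; simp
    rw [hset, uball_apply isClosed_sphere.measurableSet]
    have hz : volume (sphere (0 : E s) R ∩ closedBall (0 : E s) R) = 0 :=
      measure_mono_null Set.inter_subset_left
        (Measure.addHaar_sphere_of_ne_zero volume (0 : E s) hR.ne')
    rw [hz, mul_zero]
  filter_upwards [h1, h2'] with x hx1 hx2
  have hle : ‖x‖ ≤ R := by simpa [dist_zero_right] using mem_closedBall.mp hx1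
  rcases lt_or_eq_of_le hle with h | h
  · exact h
  · exact absurd (by simp [mem_sphere, dist_zero_right, h]) hx2

lemma F_nonneg (x : E s) : 0 ≤ F s R N x :=
  integral_nonneg fun y => inf_dist_nonneg x y

lemma F_meas (hR : 0 < R) (N : ℕ) : StronglyMeasurable (F s R N) := by
  haveI := isProb (s := s) hR
  have hgm : Measurable fun p : E s × (Fin N → E s) => ⨅ i, dist p.1 (p.2 i) :=
    Measurable.iInf fun i =>
      (continuous_fst.dist ((continuous_apply i).comp continuous_snd)).measurable
  exact hgm.stronglyMeasurable.integral_prod_right'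

lemma integrable_g (hR : 0 < R) (N : ℕ) :
    Integrable (fun p : E s × (Fin N → E s) => ⨅ i, dist p.1 (p.2 i))
      ((uball s R).prod (Measure.pi fun _ : Fin N => uball s R)) := by
  haveI := isProb (s := s) hR
  have hgm : Measurable fun p : E s × (Fin N → E s) => ⨅ i, dist p.1 (p.2 i) :=
    Measurable.iInf fun i =>
      (continuous_fst.dist ((continuous_apply i).comp continuous_snd)).measurable
  refine Integrable.mono' (integrable_const (2 * R)) hgm.aestronglyMeasurable ?_
  have hae : ∀ᵐ p : E s × (Fin N → E s) ∂(uball s R).prod (Measure.pi fun _ => uball s R),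
      p.1 ∈ closedBall (0 : E s) R ∧ ∀ i, p.2 i ∈ closedBall (0 : E s) R := by
    haveI : IsProbabilityMeasure (Measure.pi fun _ : Fin N => uball s R) := by infer_instance
    rw [MeasureTheory.ae_iff]
    have hms : MeasurableSet ((closedBall (0 : E s) R) ×ˢ
        (Set.pi Set.univ fun _ : Fin N => closedBall (0 : E s) R)) :=
      measurableSet_closedBall.prod (MeasurableSet.univ_pi fun _ => measurableSet_closedBall)
    have hone : ((uball s R).prod (Measure.pi fun _ : Fin N => uball s R))
        ((closedBall (0 : E s) R) ×ˢ
          (Set.pi Set.univ fun _ : Fin N => closedBall (0 : E s) R)) = 1 := by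
      rw [Measure.prod_prod, Measure.pi_pi]
      have hB1 : uball s R (closedBall (0 : E s) R) = 1 := by
        rw [uball_apply measurableSet_closedBall, Set.inter_self]
        exact ENNReal.inv_mul_cancel (volB_pos hR).ne' volB_ne_top
      simp [hB1]
    have hcompl : {p : E s × (Fin N → E s) |
        ¬ (p.1 ∈ closedBall (0 : E s) R ∧ ∀ i, p.2 i ∈ closedBall (0 : E s) R)} =
        ((closedBall (0 : E s) R) ×ˢ
          (Set.pi Set.univ fun _ : Fin N => closedBall (0 : E s) R))ᶜ := by
      ext p; simp [Set.mem_pi]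
    rw [hcompl, measure_compl hms (by simp [hone]), hone, measure_univ]
    simp
  filter_upwards [hae] with p hp
  rw [Real.norm_eq_abs, abs_of_nonneg (inf_dist_nonneg p.1 p.2)]
  rcases Nat.eq_zero_or_pos N with hN | hN
  · subst hN
    rw [Real.iInf_of_isEmpty]
    positivity
  · haveI : Nonempty (Fin N) := Fin.pos_iff_nonempty.mp hN
    have hbdd : BddBelow (Set.range fun i => dist p.1 (p.2 i)) :=
      ⟨0, by rintro _ ⟨j, rfl⟩; exact dist_nonneg⟩
    refine le_trans (ciInf_le hbdd (Classical.arbitrary _)) ?_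
    set i := Classical.arbitrary (Fin N)
    calc dist p.1 (p.2 i) ≤ ‖p.1‖ + ‖p.2 i‖ := by
          simpa [dist_eq_norm] using norm_sub_le p.1 (p.2 i)
    _ ≤ R + R := add_le_add (by simpa [dist_zero_right] using mem_closedBall.mp hp.1)
        (by simpa [dist_zero_right] using mem_closedBall.mp (hp.2 i))
    _ = 2 * R := by ring

lemma E_eq (hR : 0 < R) (N : ℕ) :
    (∫ ω : Fin (N + 1) → E s, (⨅ i : Fin N, dist (ω (Fin.last N)) (ω i.castSucc))
      ∂(Measure.pi fun _ : Fin (N + 1) => uball s R)) = ∫ x, F s R N x ∂uball s R := by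
  haveI := isProb (s := s) hR
  set e := MeasurableEquiv.piFinSuccAbove (fun _ : Fin (N + 1) => E s) (Fin.last N) with he
  have hmp := measurePreserving_piFinSuccAbove (fun _ : Fin (N + 1) => uball s R) (Fin.last N)
  set g : E s × (Fin N → E s) → ℝ := fun p => ⨅ i, dist p.1 (p.2 i) with hg
  have h1 : (∫ ω : Fin (N + 1) → E s,
      (⨅ i : Fin N, dist (ω (Fin.last N)) (ω i.castSucc))
        ∂(Measure.pi fun _ : Fin (N + 1) => uball s R)) =
      ∫ ω : Fin (N + 1) → E s, g (e ω) ∂(Measure.pi fun _ : Fin (N + 1) => uball s R) := by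
    refine integral_congr_ae (Filter.Eventually.of_forall fun ω => ?_)
    simp [hg, he, MeasurableEquiv.piFinSuccAbove_apply, Fin.removeNth, Fin.succAbove_last, Fin.init]
  rw [h1, hmp.integral_comp e.measurableEmbedding g, integral_prod g (integrable_g hR N)]
  rfl

theorem main_tendsto (hs : 1 ≤ s) (hR : 0 < R) :
    Tendsto (fun N : ℕ => ∫ x, q s N / R * F s R N x ∂uball s R) atTop
      (nhds (Real.Gamma (1 / s + 1))) := by
  haveI := isProb (s := s) hR
  set C := ∫ u in Set.Ioi (0:ℝ), bound s u with hC
  have hC0 : 0 ≤ C := integral_nonneg fun u => (Real.exp_pos _).le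
  have hΓ : (∫ x, Real.Gamma (1 / s + 1) ∂uball s R) = Real.Gamma (1 / s + 1) := by
    simp [measure_univ]
  rw [← hΓ]
  apply tendsto_integral_of_dominated_convergence (fun _ => C)
  · exact fun n => ((F_meas hR n).const_mul _).aestronglyMeasurable
  · exact integrable_const C
  · intro n
    rcases Nat.eq_zero_or_pos n with hn | hn
    · subst hn
      have hs0 : ((1:ℝ)/s) ≠ 0 := by
        have : (0:ℝ) < s := by exact_mod_cast hs
        positivity
      have hq0 : q s 0 = 0 := by rw [q, Nat.cast_zero, Real.zero_rpow hs0]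
      refine Filter.Eventually.of_forall fun x => ?_
      rw [hq0]
      simp [hC0]
    · filter_upwards [uball_mem_ae (s := s) hR] with x hx
      have heq : q s n / R * F s R n x = ∫ u in Set.Ioi (0:ℝ), h s R n x u :=
        (F_rescale hR hn hx).symm
      rw [Real.norm_eq_abs, heq, abs_of_nonneg (integral_nonneg fun u => h_nonneg hR x u)]
      exact J_le hs hR hn hx
  · filter_upwards [uball_mem_ae (s := s) hR, ae_norm_lt (s := s) hR] with x hx hxlt
    refine Tendsto.congr' ?_ (J_tendsto hs hR hxlt)
    filter_upwards [eventually_ge_atTop 1] with n hn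
    exact F_rescale hR hn hx

end

end Stmt10


/-- If `x₁, …, x_N` and `X` are i.i.d. uniform on a ball of radius `R` in `ℝ^s`, the
expected nearest distance `E[min_i |X − xᵢ|]` is asymptotic to `(Γ(1/s)/s) · R / N^(1/s)`
as `N → ∞`. -/
theorem stmt_10 (s : ℕ) (hs : 1 ≤ s) (R : ℝ) (hR : 0 < R) :
    Tendsto (fun N : ℕ =>
      (∫ ω : Fin (N + 1) → EuclideanSpace ℝ (Fin s),
          (⨅ i : Fin N, dist (ω (Fin.last N)) (ω i.castSucc))
        ∂(Measure.pi fun _ : Fin (N + 1) =>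
            (volume (closedBall (0 : EuclideanSpace ℝ (Fin s)) R))⁻¹ •
              volume.restrict (closedBall (0 : EuclideanSpace ℝ (Fin s)) R))) /
        ((Real.Gamma (1 / s) / s) * R / (N : ℝ) ^ ((1 : ℝ) / s)))
      atTop (nhds 1) := by
  classical
  have hsR : (0:ℝ) < (s:ℝ) := by exact_mod_cast hs
  have hΓeq : Real.Gamma (1 / (s:ℝ) + 1) = Real.Gamma (1 / s) / s := by
    rw [Real.Gamma_add_one (by positivity), one_div, inv_mul_eq_div]
  have hΓpos : (0:ℝ) < Real.Gamma (1 / (s:ℝ) + 1) :=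
    Real.Gamma_pos_of_pos (by positivity)
  have hmain := Stmt10.main_tendsto (s := s) (R := R) hs hR
  have hmain2 : Tendsto
      (fun N : ℕ => Stmt10.q s N / R * ∫ x, Stmt10.F s R N x ∂Stmt10.uball s R)
      atTop (nhds (Real.Gamma (1 / s + 1))) := by
    refine hmain.congr fun N => ?_
    exact integral_const_mul _ _
  have hdiv := hmain2.div_const (Real.Gamma (1 / (s:ℝ) + 1))
  rw [div_self hΓpos.ne'] at hdiv
  refine Tendsto.congr' ?_ hdiv
  filter_upwards [eventually_ge_atTop 1] with N hN
  have hE := Stmt10.E_eq (s := s) (R := R) hR N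
  have hmeq : (Measure.pi fun _ : Fin (N + 1) =>
      (volume (closedBall (0 : EuclideanSpace ℝ (Fin s)) R))⁻¹ •
        volume.restrict (closedBall (0 : EuclideanSpace ℝ (Fin s)) R)) =
      (Measure.pi fun _ : Fin (N + 1) => Stmt10.uball s R) := rfl
  rw [hmeq, hE, ← hΓeq]
  have hq := Stmt10.q_pos (s := s) hN
  have hqdef : (N : ℝ) ^ ((1 : ℝ) / s) = Stmt10.q s N := rfl
  rw [hqdef]
  field_simp
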